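/- Fix x ∈ ℝ, and let F_n(x) = Φ(h_n)^{n} − (1 − Φ(h_n))^{n} where h_n = (c_n x + d_n)^{1/2}, with c_n = 2 − 2b_n^{−2} and d_n = b_n² − 2b_n^{−2}, defined for n large enough that c_n x + d_n > 0. Then lim_{n→∞} b_n⁴ ( F_n(x) − Λ(x) ) = −Λ(x) e^{−x} ( 7/2 + 3x + x² ). -/

import Mathlib

open Real Filter Topology

/-- The standard normal distribution function. -/
noncomputable def stdNormalCDF (x : ℝ) : ℝ :=
  ∫ u in Set.Iic x, Real.exp (-u ^ 2 / 2) / Real.sqrt (2 * Real.pi)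

/-- The Gumbel distribution function `Λ(x) = exp(−e^{−x})`. -/
noncomputable def gumbel (x : ℝ) : ℝ := Real.exp (-Real.exp (-x))

section AuxProofs
open MeasureTheory Set

lemma gauss_eq : (fun u : ℝ => Real.exp (-u ^ 2 / 2) / Real.sqrt (2 * Real.pi))
    = fun u : ℝ => Real.exp (-(1/2) * u ^ 2) * (Real.sqrt (2 * Real.pi))⁻¹ := by
  funext u; rw [div_eq_mul_inv]; congr 2; ring

lemma gauss_integrable : Integrable (fun u : ℝ => Real.exp (-u ^ 2 / 2) / Real.sqrt (2 * Real.pi)) := by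
  rw [gauss_eq]
  exact (integrable_exp_neg_mul_sq (by norm_num : (0:ℝ) < 1/2)).mul_const _

lemma gauss_total : ∫ u : ℝ, Real.exp (-u ^ 2 / 2) / Real.sqrt (2 * Real.pi) = 1 := by
  rw [gauss_eq, MeasureTheory.integral_mul_const, integral_gaussian,
    show π / (1/2) = 2 * π by ring]
  have : Real.sqrt (2*π) ≠ 0 := by positivity
  field_simp

lemma cdf_compl (h : ℝ) : 1 - stdNormalCDF h
    = ∫ u in Set.Ioi h, Real.exp (-u ^ 2 / 2) / Real.sqrt (2 * Real.pi) := by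
  have h1 := MeasureTheory.integral_add_compl (f := fun u : ℝ => Real.exp (-u ^ 2 / 2) / Real.sqrt (2 * Real.pi)) (measurableSet_Iic (a := h)) gauss_integrable
  rw [gauss_total] at h1
  rw [show Set.Ioi h = (Set.Iic h)ᶜ by simp]
  rw [stdNormalCDF]
  linarith [h1]

lemma exp_sq_tendsto : Tendsto (fun u : ℝ => Real.exp (-u^2/2)) atTop (𝓝 0) := by
  apply Real.tendsto_exp_atBot.comp
  have h1 : Tendsto (fun u : ℝ => u^2/2) atTop atTop :=
    (tendsto_pow_atTop two_ne_zero).atTop_div_const two_pos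
  have := tendsto_neg_atTop_atBot.comp h1
  convert this using 2 with u
  simp [Function.comp]; ring

lemma exp_sq_integrableOn (h : ℝ) : IntegrableOn (fun u : ℝ => Real.exp (-u^2/2)) (Set.Ioi h) := by
  have : Integrable (fun u : ℝ => Real.exp (-(1/2) * u^2)) :=
    integrable_exp_neg_mul_sq (by norm_num)
  have e : (fun u : ℝ => Real.exp (-u^2/2)) = fun u : ℝ => Real.exp (-(1/2) * u^2) := by
    funext u; congr 1; ring
  rw [e]; exact this.integrableOn

lemma mul_exp_sq_integrableOn (h : ℝ) :
    IntegrableOn (fun u : ℝ => u * Real.exp (-u^2/2)) (Set.Ioi h) := by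
  have : Integrable (fun u : ℝ => u * Real.exp (-(1/2) * u^2)) :=
    integrable_mul_exp_neg_mul_sq (by norm_num)
  have e : (fun u : ℝ => u * Real.exp (-u^2/2)) = fun u : ℝ => u * Real.exp (-(1/2) * u^2) := by
    funext u; congr 2; ring
  rw [e]; exact this.integrableOn

lemma first_moment (h : ℝ) :
    ∫ u in Set.Ioi h, u * Real.exp (-u^2/2) = Real.exp (-h^2/2) := by
  have key : ∫ u in Set.Ioi h, u * Real.exp (-u^2/2) = 0 - (- Real.exp (-h^2/2)) := by
    apply MeasureTheory.integral_Ioi_of_hasDerivAt_of_tendsto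
        (f := fun u : ℝ => -Real.exp (-u^2/2))
    · apply Continuous.continuousWithinAt; continuity
    · intro u _
      have h1 : HasDerivAt (fun u : ℝ => -u^2/2) (-u) u := by
        have := ((hasDerivAt_pow 2 u).neg).div_const 2
        exact this.congr_deriv (by norm_num; ring)
      have := (h1.exp).neg
      exact this.congr_deriv (by ring)
    · exact mul_exp_sq_integrableOn h
    · simpa using exp_sq_tendsto.neg
  simpa using key

lemma aux_integrableOn (h : ℝ) (hh : 0 < h) :
    IntegrableOn (fun u : ℝ => Real.exp (-u^2/2) * (1 + 15/u^6)) (Set.Ioi h) := by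
  apply MeasureTheory.Integrable.mono' ((exp_sq_integrableOn h).const_mul (1 + 15/h^6))
  · apply ContinuousOn.aestronglyMeasurable _ measurableSet_Ioi
    apply ContinuousOn.mul (by fun_prop)
    apply ContinuousOn.add continuousOn_const
    apply ContinuousOn.div continuousOn_const (by fun_prop)
    intro u hu
    have hu0 : 0 < u := lt_trans hh hu
    positivity
  · rw [MeasureTheory.ae_restrict_iff' measurableSet_Ioi]
    filter_upwards with u hu
    have hu' : h < u := hu
    have h6 : h^6 ≤ u^6 := by
      apply pow_le_pow_left₀ hh.le hu'.le
    rw [Real.norm_eq_abs, abs_mul, abs_of_pos (Real.exp_pos _), abs_of_pos (by positivity)]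
    rw [mul_comm (Real.exp _)]
    apply mul_le_mul_of_nonneg_right _ (Real.exp_pos _).le
    have h1 : (15:ℝ)/u^6 ≤ 15/h^6 := by
      apply div_le_div_of_nonneg_left (by norm_num) (by positivity) h6
    linarith

lemma sixth_integrableOn (h : ℝ) (hh : 0 < h) :
    IntegrableOn (fun u : ℝ => Real.exp (-u^2/2) / u^6) (Set.Ioi h) := by
  have h1 := (aux_integrableOn h hh).sub (exp_sq_integrableOn h)
  have e : (fun u : ℝ => Real.exp (-u^2/2) / u^6)
      = fun u => (Real.exp (-u^2/2) * (1 + 15/u^6) - Real.exp (-u^2/2)) / 15 := by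
    funext u; field_simp; ring
  rw [e]; exact h1.div_const 15

lemma mills_identity (h : ℝ) (hh : 0 < h) :
    ∫ u in Set.Ioi h, Real.exp (-u^2/2) * (1 + 15/u^6)
      = Real.exp (-h^2/2) * (1/h - 1/h^3 + 3/h^5) := by
  have key : ∫ u in Set.Ioi h, Real.exp (-u^2/2) * (1 + 15/u^6)
      = 0 - (- Real.exp (-h^2/2) * ((h^4 - h^2 + 3)/h^5)) := by
    apply MeasureTheory.integral_Ioi_of_hasDerivAt_of_tendsto
        (f := fun u : ℝ => -Real.exp (-u^2/2) * ((u^4 - u^2 + 3)/u^5))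
    · apply ContinuousAt.continuousWithinAt
      have : h ≠ 0 := hh.ne'
      fun_prop (disch := positivity)
    · intro u hu
      have hu0 : (0:ℝ) < u := lt_trans hh hu
      have h1 : HasDerivAt (fun u : ℝ => -u^2/2) (-u) u := by
        have := ((hasDerivAt_pow 2 u).neg).div_const 2
        exact this.congr_deriv (by norm_num; ring)
      have h2 : HasDerivAt (fun u : ℝ => -Real.exp (-u^2/2)) (u * Real.exp (-u^2/2)) u := by
        have := (h1.exp).neg
        exact this.congr_deriv (by ring)
      have h3 : HasDerivAt (fun u : ℝ => (u^4 - u^2 + 3)/u^5)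
          (((4*u^3 - 2*u) * u^5 - (u^4 - u^2 + 3) * (5*u^4)) / (u^5)^2) u := by
        apply HasDerivAt.div
        · have := ((hasDerivAt_pow 4 u).sub (hasDerivAt_pow 2 u)).add_const 3
          exact this.congr_deriv (by norm_num)
        · simpa using hasDerivAt_pow 5 u
        · positivity
      have := h2.mul h3
      refine this.congr_deriv ?_
      have hu6 : u^6 ≠ 0 := by positivity
      field_simp
      ring
    · exact aux_integrableOn h hh
    · have h1 : Tendsto (fun u : ℝ => -Real.exp (-u^2/2) * ((u^4 - u^2 + 3)/u^5)) atTop (𝓝 0) := by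
        apply squeeze_zero_norm' (a := fun u : ℝ => Real.exp (-u^2/2) * 5)
        · filter_upwards [eventually_ge_atTop (1:ℝ)] with u hu
          have hu0 : (0:ℝ) < u := by linarith
          rw [norm_mul, norm_neg, Real.norm_eq_abs, abs_of_pos (Real.exp_pos _)]
          apply mul_le_mul_of_nonneg_left _ (Real.exp_pos _).le
          rw [Real.norm_eq_abs]
          have hb : (u^4 - u^2 + 3)/u^5 ≤ 5 := by
            rw [div_le_iff₀ (by positivity)]
            nlinarith [pow_le_pow_right₀ hu (by norm_num : 4 ≤ 5), sq_nonneg u,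
              one_le_pow₀ (n:=5) hu, one_le_pow₀ (n:=2) hu]
          have hb0 : 0 ≤ (u^4 - u^2 + 3)/u^5 := by
            apply div_nonneg _ (by positivity)
            nlinarith [sq_nonneg (u^2 - 1)]
          rw [abs_of_nonneg hb0]; exact hb
        · simpa using exp_sq_tendsto.mul_const 5
      exact h1
  rw [key]
  have h5 : h^5 ≠ 0 := by positivity
  field_simp
  ring

lemma mills_bounds (h : ℝ) (hh : 0 < h) :
    Real.exp (-h^2/2) * (1/h - 1/h^3 + 3/h^5) - 15 * (Real.exp (-h^2/2) / h^7)
      ≤ ∫ u in Set.Ioi h, Real.exp (-u^2/2)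
    ∧ (∫ u in Set.Ioi h, Real.exp (-u^2/2)) ≤ Real.exp (-h^2/2) * (1/h - 1/h^3 + 3/h^5) := by
  set J := ∫ u in Set.Ioi h, Real.exp (-u^2/2) / u^6 with hJ
  have split : (∫ u in Set.Ioi h, Real.exp (-u^2/2) * (1 + 15/u^6))
      = (∫ u in Set.Ioi h, Real.exp (-u^2/2)) + 15 * J := by
    have e : (fun u : ℝ => Real.exp (-u^2/2) * (1 + 15/u^6))
        = fun u : ℝ => Real.exp (-u^2/2) + 15 * (Real.exp (-u^2/2) / u^6) := by
      funext u; field_simp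
    rw [e, MeasureTheory.integral_add (exp_sq_integrableOn h)
      ((sixth_integrableOn h hh).const_mul 15), integral_const_mul]
  have base : (∫ u in Set.Ioi h, Real.exp (-u^2/2))
      = Real.exp (-h^2/2) * (1/h - 1/h^3 + 3/h^5) - 15 * J := by
    rw [← mills_identity h hh, split]; ring
  have Jnonneg : 0 ≤ J := by
    apply MeasureTheory.setIntegral_nonneg measurableSet_Ioi
    intro u hu
    have : 0 < u := lt_trans hh hu
    positivity
  have Jle : J ≤ Real.exp (-h^2/2) / h^7 := by
    have mono : J ≤ ∫ u in Set.Ioi h, u * Real.exp (-u^2/2) / h^7 := by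
      apply MeasureTheory.setIntegral_mono_on (sixth_integrableOn h hh)
        ((mul_exp_sq_integrableOn h).div_const _) measurableSet_Ioi
      intro u hu
      have hu' : h < u := hu
      have hu0 : 0 < u := lt_trans hh hu'
      rw [div_le_div_iff₀ (by positivity) (by positivity)]
      have h7 : h^7 ≤ u^7 := pow_le_pow_left₀ hh.le hu'.le 7
      calc Real.exp (-u^2/2) * h^7 ≤ Real.exp (-u^2/2) * u^7 := by
            apply mul_le_mul_of_nonneg_left h7 (Real.exp_pos _).le
        _ = u * Real.exp (-u^2/2) * u^6 := by ring
    calc J ≤ ∫ u in Set.Ioi h, u * Real.exp (-u^2/2) / h^7 := mono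
      _ = Real.exp (-h^2/2) / h^7 := by
          rw [MeasureTheory.integral_div, first_moment]
  constructor
  · rw [base]; linarith
  · rw [base]; linarith

lemma tendsto_E2 (a : ℝ) :
    Tendsto (fun t : ℝ => (Real.exp (a*t) - 1 - a*t)/t^2) (𝓝[>] (0:ℝ)) (𝓝 (a^2/2)) := by
  have key : Tendsto (fun t : ℝ => (Real.exp (a*t) - 1 - a*t)/t^2 - a^2/2) (𝓝[>] (0:ℝ)) (𝓝 0) := by
    apply squeeze_zero_norm' (a := fun t : ℝ => (2*|a|^3/9) * |t|)
    · have h1 : ∀ᶠ t in 𝓝[>] (0:ℝ), |t - 0| < 1/(|a|+1) :=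
        (eventually_abs_sub_lt 0 (by positivity)).filter_mono nhdsWithin_le_nhds
      filter_upwards [h1, self_mem_nhdsWithin] with t ht ht0
      have ht0' : (0:ℝ) < t := ht0
      rw [sub_zero] at ht
      have hat : |a*t| ≤ 1 := by
        rw [abs_mul]
        rcases eq_or_lt_of_le (abs_nonneg a) with h|h
        · rw [← h]; norm_num
        · have h2 : |t| < 1/|a| := lt_of_lt_of_le ht (by
            apply one_div_le_one_div_of_le h; linarith)
          have := mul_lt_mul_of_pos_left h2 h
          rw [mul_one_div, div_self h.ne'] at this
          linarith
      have hb := Real.exp_bound hat (n := 3) (by norm_num)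
      have hsum : ∑ m ∈ Finset.range 3, (a*t) ^ m / (m.factorial : ℝ)
          = 1 + a*t + (a*t)^2/2 := by
        simp [Finset.sum_range_succ, Nat.factorial]
      rw [hsum] at hb
      have e : (Real.exp (a*t) - 1 - a*t)/t^2 - a^2/2
          = (Real.exp (a*t) - (1 + a*t + (a*t)^2/2))/t^2 := by
        field_simp; ring
      rw [e, Real.norm_eq_abs, abs_div, abs_of_pos (by positivity : (0:ℝ) < t^2)]
      calc |Real.exp (a*t) - (1 + a*t + (a*t)^2/2)| / t^2
          ≤ |a*t|^3 * (4/(6*3)) / t^2 := by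
            apply div_le_div_of_nonneg_right _ (by positivity)
            refine hb.trans (le_of_eq ?_); norm_num [Nat.factorial]
        _ = (2*|a|^3/9) * |t| := by
            have h3 : |a*t|^3 = |a|^3 * (|t| * t^2) := by
              rw [abs_mul, mul_pow, ← sq_abs t]; ring
            rw [h3]; field_simp; ring
    · have : Tendsto (fun t : ℝ => (2*|a|^3/9) * |t|) (𝓝 (0:ℝ)) (𝓝 0) := by
        have := (continuous_abs.tendsto (0:ℝ)).const_mul (2*|a|^3/9)
        simpa using this
      exact this.mono_left nhdsWithin_le_nhds
  have := key.add_const (a^2/2)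
  simpa using this

def Pf (x t : ℝ) : ℝ := 1 + 2*x*t - (2*x+2)*t^2

noncomputable def gf (x t : ℝ) : ℝ :=
  ((x+1)*(Pf x t)^2 - Pf x t + 3*t)*(Real.sqrt (Pf x t)+1)
    - (1-(x+1)*t)*(Pf x t)^2*(2*x-(2*x+2)*t)

lemma Pf_hasDerivAt (x : ℝ) : HasDerivAt (fun t => Pf x t) (2*x) 0 := by
  have h1 := ((hasDerivAt_id (0:ℝ)).const_mul (2*x)).const_add 1
  have h2 := (hasDerivAt_pow 2 (0:ℝ)).const_mul (2*x+2)
  have h3 := h1.sub h2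
  have hfun : (fun x_1 : ℝ => 1 + 2*x*id x_1 - (2*x+2)*x_1^2) = fun t => Pf x t := by
    funext t; simp [Pf]
  exact h3.congr_deriv (by norm_num)

lemma sqrtPf_hasDerivAt (x : ℝ) : HasDerivAt (fun t => Real.sqrt (Pf x t)) x 0 := by
  have h0 : Pf x 0 = 1 := by simp [Pf]
  have hs := Real.hasDerivAt_sqrt (x := Pf x 0) (by rw [h0]; norm_num)
  have := hs.comp 0 (Pf_hasDerivAt x)
  refine this.congr_deriv ?_
  rw [h0]
  simp

lemma gf_hasDerivAt (x : ℝ) : HasDerivAt (gf x) (3*x^2+8*x+8) 0 := by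
  have h0 : Pf x 0 = 1 := by simp [Pf]
  have hP := Pf_hasDerivAt x
  have hP2 : HasDerivAt (fun t => (Pf x t)^2) (4*x) 0 := by
    have := hP.pow 2
    refine this.congr_deriv ?_
    rw [h0]; push_cast; ring
  have hA : HasDerivAt (fun t => (x+1)*(Pf x t)^2 - Pf x t + 3*t)
      (4*x^2+2*x+3) 0 := by
    have := ((hP2.const_mul (x+1)).sub hP).add ((hasDerivAt_id (0:ℝ)).const_mul 3)
    refine this.congr_deriv ?_
    ring
  have hB : HasDerivAt (fun t => (1-(x+1)*t)*(Pf x t)^2*(2*x-(2*x+2)*t))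
      (6*x^2-4*x-2) 0 := by
    have hu : HasDerivAt (fun t : ℝ => 1-(x+1)*t) (-(x+1)) 0 := by
      have := ((hasDerivAt_id (0:ℝ)).const_mul (x+1)).const_sub 1
      refine this.congr_deriv ?_
      simp
    have hw : HasDerivAt (fun t : ℝ => 2*x-(2*x+2)*t) (-(2*x+2)) 0 := by
      have := ((hasDerivAt_id (0:ℝ)).const_mul (2*x+2)).const_sub (2*x)
      refine this.congr_deriv ?_
      simp
    have := (hu.mul hP2).mul hw
    refine this.congr_deriv ?_
    rw [h0]; simp [h0]; ring
  have hs1 : HasDerivAt (fun t => Real.sqrt (Pf x t) + 1) x 0 :=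
    (sqrtPf_hasDerivAt x).add_const 1
  have := (hA.mul hs1).sub hB
  refine this.congr_deriv ?_
  rw [h0]
  simp [Real.sqrt_one]
  ring

lemma tendsto_R (x : ℝ) :
    Tendsto (fun t : ℝ => ((1 - t/Pf x t + 3*t^2/(Pf x t)^2)/Real.sqrt (Pf x t)
      - 1 + (x+1)*t)/t^2) (𝓝[>] (0:ℝ)) (𝓝 ((3*x^2+8*x+8)/2)) := by
  have hPc : Tendsto (fun t => Pf x t) (𝓝 0) (𝓝 1) := by
    have : ContinuousAt (fun t => Pf x t) 0 := by unfold Pf; fun_prop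
    have h := this.tendsto
    simpa [Pf] using h
  have hPpos : ∀ᶠ t in 𝓝[>](0:ℝ), 0 < Pf x t :=
    (hPc.eventually (eventually_gt_nhds zero_lt_one)).filter_mono nhdsWithin_le_nhds
  -- limit of gf x t / t
  have hslope : Tendsto (fun t => gf x t / t) (𝓝[>] (0:ℝ)) (𝓝 (3*x^2+8*x+8)) := by
    have h1 := hasDerivAt_iff_tendsto_slope.mp (gf_hasDerivAt x)
    have h2 : Tendsto (slope (gf x) 0) (𝓝[>] (0:ℝ)) (𝓝 (3*x^2+8*x+8)) :=
      h1.mono_left (nhdsWithin_mono 0 (fun t ht => ne_of_gt ht))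
    apply h2.congr
    intro t
    rw [slope_def_field]
    have hg0 : gf x 0 = 0 := by
      simp [gf, Pf]
      ring
    rw [hg0]
    simp only [sub_zero]
  -- limit of the correction factor
  have hfac : Tendsto (fun t => ((Real.sqrt (Pf x t)+1)*(Pf x t)^2*Real.sqrt (Pf x t))⁻¹)
      (𝓝[>] (0:ℝ)) (𝓝 (1/2)) := by
    have hc : ContinuousAt (fun t => ((Real.sqrt (Pf x t)+1)*(Pf x t)^2*Real.sqrt (Pf x t))⁻¹) 0 := by
      apply ContinuousAt.inv₀
      · exact (((Real.continuous_sqrt.comp (by unfold Pf; fun_prop)).add continuous_const).mul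
          ((by unfold Pf; fun_prop : Continuous fun t => Pf x t).pow 2)).continuousAt.mul
          (Real.continuous_sqrt.comp (by unfold Pf; fun_prop)).continuousAt
      · simp [Pf]
    have h2 := hc.tendsto.mono_left (nhdsWithin_le_nhds : 𝓝[>](0:ℝ) ≤ 𝓝 0)
    convert h2 using 2
    simp [Pf]
    norm_num
  have key := hslope.mul hfac
  rw [show ((3*x^2+8*x+8) * (1/2) : ℝ) = (3*x^2+8*x+8)/2 from by ring] at key
  apply key.congr'
  filter_upwards [hPpos, self_mem_nhdsWithin] with t hp ht
  have ht0 : (0:ℝ) < t := ht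
  set s := Real.sqrt (Pf x t) with hsdef
  have hs0 : 0 < s := Real.sqrt_pos.mpr hp
  have hs2 : s^2 = Pf x t := Real.sq_sqrt hp.le
  set p := Pf x t with hpdef
  have e0 : (1 - t/p + 3*t^2/p^2)/s - 1 + (x+1)*t
      = (p^2 - t*p + 3*t^2 - (1-(x+1)*t)*p^2*s)/(p^2*s) := by
    field_simp
    ring
  have poly : (p^2 - t*p + 3*t^2 - (1-(x+1)*t)*p^2*s)*(s+1) = t * gf x t := by
    rw [gf, ← hsdef, ← hpdef]
    have hPexp : p = 1 + 2*x*t - (2*x+2)*t^2 := hpdef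
    linear_combination (p^2*((x+1)*t - 1)) * hs2 + (p^2*((x+1)*t - 1)) * hPexp
  have e2 : p^2 - t*p + 3*t^2 - (1-(x+1)*t)*p^2*s = t * gf x t/(s+1) :=
    (eq_div_iff (by positivity)).mpr poly
  rw [e0, e2]
  field_simp

noncomputable def Qf (x t : ℝ) : ℝ := (1 - t/Pf x t + 3*t^2/(Pf x t)^2)/Real.sqrt (Pf x t)

lemma tendsto_Qf (x : ℝ) : Tendsto (fun t => Qf x t) (𝓝[>] (0:ℝ)) (𝓝 1) := by
  have hc : ContinuousAt (fun t => Qf x t) 0 := by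
    have hP : ContinuousAt (fun t => Pf x t) 0 := by unfold Pf; fun_prop
    exact ContinuousAt.div
      ((continuousAt_const.sub (continuousAt_id.div hP (by simp [Pf]))).add
        ((by fun_prop : ContinuousAt (fun t : ℝ => 3*t^2) 0).div (hP.pow 2) (by simp [Pf])))
      (Real.continuous_sqrt.comp (by unfold Pf; fun_prop)).continuousAt
      (by simp [Pf])
  have h2 := hc.tendsto.mono_left (nhdsWithin_le_nhds : 𝓝[>](0:ℝ) ≤ 𝓝 0)
  convert h2 using 2
  simp [Qf, Pf]

lemma main_limit (x : ℝ) :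
    Tendsto (fun t : ℝ => (Real.exp ((x+1)*t) * Qf x t - 1)/t^2) (𝓝[>] (0:ℝ))
      (𝓝 (x^2+3*x+7/2)) := by
  have hE2 := tendsto_E2 (x+1)
  have hR : Tendsto (fun t : ℝ => (Qf x t - 1 + (x+1)*t)/t^2) (𝓝[>] (0:ℝ))
      (𝓝 ((3*x^2+8*x+8)/2)) := tendsto_R x
  have hQ := tendsto_Qf x
  have hlin : Tendsto (fun t : ℝ => 1 + (x+1)*t) (𝓝[>] (0:ℝ)) (𝓝 1) := by
    have : ContinuousAt (fun t : ℝ => 1 + (x+1)*t) 0 := by fun_prop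
    have h2 := this.tendsto.mono_left (nhdsWithin_le_nhds : 𝓝[>](0:ℝ) ≤ 𝓝 0)
    convert h2 using 2
    norm_num
  have key := ((hE2.mul hQ).add (hlin.mul hR)).add_const (-(x+1)^2)
  have hval : (x+1)^2/2 * 1 + 1 * ((3*x^2+8*x+8)/2) + -(x+1)^2 = x^2+3*x+7/2 := by ring
  rw [hval] at key
  apply key.congr'
  filter_upwards [self_mem_nhdsWithin] with t ht
  have ht0 : (0:ℝ) < t := ht
  have ht' : t ≠ 0 := ht0.ne'
  field_simp
  ring

lemma tendsto_G2 (x : ℝ) :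
    Tendsto (fun t : ℝ => Real.exp ((x+1)*t) * t/((Pf x t)^3 * Real.sqrt (Pf x t)))
      (𝓝[>] (0:ℝ)) (𝓝 0) := by
  have hc : ContinuousAt (fun t : ℝ => Real.exp ((x+1)*t) * t/((Pf x t)^3 * Real.sqrt (Pf x t))) 0 := by
    apply ContinuousAt.div
    · fun_prop
    · exact (((by unfold Pf; fun_prop : Continuous fun t => Pf x t).pow 3).mul
        (Real.continuous_sqrt.comp (by unfold Pf; fun_prop))).continuousAt
    · simp [Pf]
  have h2 := hc.tendsto.mono_left (nhdsWithin_le_nhds : 𝓝[>](0:ℝ) ≤ 𝓝 0)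
  convert h2 using 2
  simp [Pf]

noncomputable def Efun (t : ℝ) : ℝ := if t = 0 then 1 else (Real.exp t - 1)/t

lemma exp_sub_one_eq (t : ℝ) : Real.exp t - 1 = t * Efun t := by
  unfold Efun
  by_cases h : t = 0
  · simp [h]
  · rw [if_neg h]; field_simp

lemma tendsto_Efun : Tendsto Efun (𝓝 (0:ℝ)) (𝓝 1) := by
  have h1 := hasDerivAt_iff_tendsto_slope.mp (Real.hasDerivAt_exp 0)
  rw [Real.exp_zero] at h1
  have h2 : Tendsto Efun (𝓝[≠] (0:ℝ)) (𝓝 1) := by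
    apply h1.congr'
    filter_upwards [self_mem_nhdsWithin] with t ht
    have h : t ≠ 0 := ht
    rw [slope_def_field, Real.exp_zero, Efun, if_neg h, sub_zero]
  rw [← nhdsNE_sup_pure (0:ℝ)]
  rw [Filter.tendsto_sup]
  refine ⟨h2, ?_⟩
  have := tendsto_pure_nhds Efun 0
  rw [show Efun 0 = 1 from by simp [Efun]] at this
  exact this

lemma sqrt_exp' (y : ℝ) : Real.sqrt (Real.exp y) = Real.exp (y/2) := by
  rw [show Real.exp y = (Real.exp (y/2))^2 from by
    rw [pow_two, ← Real.exp_add]; congr 1; ring]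
  exact Real.sqrt_sq (Real.exp_pos _).le

theorem part1
    (b : ℕ → ℝ)
    (hb : ∀ n : ℕ, 1 ≤ n → 0 < b n ∧
      2 * Real.pi * (b n) ^ 2 * Real.exp ((b n) ^ 2) = (n : ℝ) ^ 2)
    (x : ℝ)
    (c d h : ℕ → ℝ)
    (hc : ∀ n : ℕ, c n = 2 - 2 / (b n) ^ 2)
    (hd : ∀ n : ℕ, d n = (b n) ^ 2 - 2 / (b n) ^ 2)
    (hh : ∀ n : ℕ, h n = (c n * x + d n) ^ ((1 : ℝ) / 2)) :
    Tendsto (fun n : ℕ => ((b n)^2)^2 * ((n : ℝ) * (1 - stdNormalCDF (h n)) - Real.exp (-x)))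
      atTop (𝓝 (Real.exp (-x) * (x^2+3*x+7/2))) := by
  set β : ℕ → ℝ := fun n => (b n)^2 with hβdef
  have hβpos : ∀ n, 1 ≤ n → 0 < β n := fun n hn => pow_pos (hb n hn).1 2
  have hβtop : Tendsto β atTop atTop := by
    apply tendsto_atTop_mono' atTop
      (show ∀ᶠ n : ℕ in atTop, Real.log n - Real.log (2*π)/2 ≤ β n from ?_)
    · have h1 : Tendsto (fun n : ℕ => Real.log n) atTop atTop :=
        Real.tendsto_log_atTop.comp tendsto_natCast_atTop_atTop
      have h2 := tendsto_atTop_add_const_right atTop (-(Real.log (2*π)/2)) h1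
      apply h2.congr
      intro n; ring
    · filter_upwards [eventually_ge_atTop 1] with n hn
      have hβ0 := hβpos n hn
      have heq : 2 * π * β n * Real.exp (β n) = (n:ℝ)^2 := (hb n hn).2
      have hexp := Real.add_one_le_exp (β n)
      have hpi := Real.pi_pos
      have h1 : (n:ℝ)^2 ≤ 2*π*(Real.exp (β n)*Real.exp (β n)) := by
        rw [← heq]
        nlinarith [Real.exp_pos (β n), mul_pos (mul_pos two_pos hpi) (Real.exp_pos (β n)),
          mul_le_mul_of_nonneg_right hexp (Real.exp_pos (β n)).le]
      rw [← Real.exp_add] at h1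
      have hn0 : (0:ℝ) < (n:ℝ)^2 := by
        have : (1:ℝ) ≤ (n:ℝ) := by exact_mod_cast hn
        positivity
      have h2 : Real.log ((n:ℝ)^2) ≤ Real.log (2*π*Real.exp (β n + β n)) :=
        Real.log_le_log hn0 h1
      rw [Real.log_mul (by positivity) (Real.exp_pos _).ne', Real.log_exp,
        Real.log_pow] at h2
      push_cast at h2
      linarith
  have htn : Tendsto (fun n => (β n)⁻¹) atTop (𝓝[>] (0:ℝ)) := by
    rw [tendsto_nhdsWithin_iff]
    refine ⟨tendsto_inv_atTop_zero.comp hβtop, ?_⟩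
    filter_upwards [hβtop.eventually_gt_atTop 0] with n hn
    exact inv_pos.mpr hn
  have hPpos_t : ∀ᶠ t in 𝓝[>](0:ℝ), 0 < Pf x t := by
    have hPc : Tendsto (fun t => Pf x t) (𝓝 0) (𝓝 1) := by
      have hco : ContinuousAt (fun t => Pf x t) 0 := by unfold Pf; fun_prop
      simpa [Pf] using hco.tendsto
    exact (hPc.eventually (eventually_gt_nhds zero_lt_one)).filter_mono nhdsWithin_le_nhds
  have hhi : Tendsto (fun n => Real.exp (-x) *
      ((Real.exp ((x+1)*(β n)⁻¹) * Qf x (β n)⁻¹ - 1)/((β n)⁻¹)^2)) atTop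
      (𝓝 (Real.exp (-x) * (x^2+3*x+7/2))) :=
    (((main_limit x).const_mul (Real.exp (-x))).comp htn)
  have hG2 : Tendsto (fun n => Real.exp (-x) *
      (Real.exp ((x+1)*(β n)⁻¹) * (β n)⁻¹/((Pf x (β n)⁻¹)^3 * Real.sqrt (Pf x (β n)⁻¹))))
      atTop (𝓝 0) := by
    have h2 := ((tendsto_G2 x).const_mul (Real.exp (-x))).comp htn
    rw [mul_zero] at h2
    exact h2
  have hlo : Tendsto (fun n => Real.exp (-x) *
      ((Real.exp ((x+1)*(β n)⁻¹) * Qf x (β n)⁻¹ - 1)/((β n)⁻¹)^2)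
      - 15 * (Real.exp (-x) *
      (Real.exp ((x+1)*(β n)⁻¹) * (β n)⁻¹/((Pf x (β n)⁻¹)^3 * Real.sqrt (Pf x (β n)⁻¹)))))
      atTop (𝓝 (Real.exp (-x) * (x^2+3*x+7/2))) := by
    have h2 := hhi.sub (hG2.const_mul 15)
    simpa using h2
  have hboth : ∀ᶠ n : ℕ in atTop,
      (Real.exp (-x) * ((Real.exp ((x+1)*(β n)⁻¹) * Qf x (β n)⁻¹ - 1)/((β n)⁻¹)^2)
        - 15 * (Real.exp (-x) *
        (Real.exp ((x+1)*(β n)⁻¹) * (β n)⁻¹/((Pf x (β n)⁻¹)^3 * Real.sqrt (Pf x (β n)⁻¹))))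
        ≤ (β n)^2 * ((n : ℝ) * (1 - stdNormalCDF (h n)) - Real.exp (-x)))
      ∧ (β n)^2 * ((n : ℝ) * (1 - stdNormalCDF (h n)) - Real.exp (-x))
        ≤ Real.exp (-x) * ((Real.exp ((x+1)*(β n)⁻¹) * Qf x (β n)⁻¹ - 1)/((β n)⁻¹)^2) := by
    filter_upwards [eventually_ge_atTop 1, htn.eventually hPpos_t] with n hn1 hp
    have hβ0 : 0 < β n := hβpos n hn1
    set t : ℝ := (β n)⁻¹ with htdef
    have ht0 : 0 < t := inv_pos.mpr hβ0
    have hyeq : c n * x + d n = β n * Pf x t := by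
      rw [hc, hd]
      unfold Pf
      rw [htdef]
      have hb0 : b n ≠ 0 := (hb n hn1).1.ne'
      simp only [hβdef]
      field_simp
      ring
    have hy0 : 0 < c n * x + d n := by rw [hyeq]; positivity
    have hhn : h n = Real.sqrt (c n * x + d n) := by
      rw [hh n, ← Real.sqrt_eq_rpow]
    have hpos : 0 < h n := by rw [hhn]; exact Real.sqrt_pos.mpr hy0
    have hh2 : (h n)^2 = β n * Pf x t := by
      rw [hhn, Real.sq_sqrt hy0.le, hyeq]
    set sβ : ℝ := Real.sqrt (β n) with hsβdef
    set sp : ℝ := Real.sqrt (Pf x t) with hspdef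
    have hsβ0 : 0 < sβ := Real.sqrt_pos.mpr hβ0
    have hsp0 : 0 < sp := Real.sqrt_pos.mpr hp
    have hsβ2 : sβ^2 = β n := Real.sq_sqrt hβ0.le
    have hsp2 : sp^2 = Pf x t := Real.sq_sqrt hp.le
    have hhsplit : h n = sβ * sp := by
      rw [hhn, hyeq, Real.sqrt_mul hβ0.le]
    have hn_val : (n:ℝ) = Real.sqrt (2*π) * sβ * Real.exp (β n/2) := by
      have hcast : (0:ℝ) ≤ (n:ℝ) := Nat.cast_nonneg n
      have he : (n:ℝ) = Real.sqrt ((n:ℝ)^2) := (Real.sqrt_sq hcast).symm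
      rw [he, ← (hb n hn1).2,
        show 2*π*β n*Real.exp (β n) = (2*π)*(β n * Real.exp (β n)) from by ring,
        Real.sqrt_mul (by positivity), Real.sqrt_mul hβ0.le, sqrt_exp']
      ring
    have hexpprod : Real.exp (β n/2) * Real.exp (-(h n)^2/2)
        = Real.exp (-x) * Real.exp ((x+1)*t) := by
      rw [hh2, ← Real.exp_add, ← Real.exp_add]
      congr 1
      unfold Pf
      rw [htdef]
      field_simp
      ring
    have htval : t = (sβ^2)⁻¹ := by rw [hsβ2]
    have h2π : (0:ℝ) < Real.sqrt (2*π) := Real.sqrt_pos.mpr (by positivity)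
    have hW : sβ * (1/(sβ*sp) - 1/(sβ*sp)^3 + 3/(sβ*sp)^5)
        = (1 - t/Pf x t + 3*t^2/(Pf x t)^2)/sp := by
      rw [← hsp2, htval]
      field_simp
    have I1 : (n:ℝ) * (Real.exp (-(h n)^2/2) * (1/h n - 1/(h n)^3 + 3/(h n)^5) / Real.sqrt (2*π))
        = Real.exp (-x) * (Real.exp ((x+1)*t) * Qf x t) := by
      rw [hhsplit] at hexpprod
      rw [hn_val, hhsplit]
      calc Real.sqrt (2*π) * sβ * Real.exp (β n/2) *
            (Real.exp (-(sβ*sp)^2/2) * (1/(sβ*sp) - 1/(sβ*sp)^3 + 3/(sβ*sp)^5) / Real.sqrt (2*π))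
          = (sβ * (1/(sβ*sp) - 1/(sβ*sp)^3 + 3/(sβ*sp)^5))
            * (Real.exp (β n/2) * Real.exp (-(sβ*sp)^2/2)) := by
            field_simp
            try ring
        _ = (sβ * (1/(sβ*sp) - 1/(sβ*sp)^3 + 3/(sβ*sp)^5))
            * (Real.exp (-x) * Real.exp ((x+1)*t)) := by rw [hexpprod]
        _ = Real.exp (-x) * (Real.exp ((x+1)*t) * Qf x t) := by
            rw [hW, Qf, ← hspdef]
            ring
    have hW2 : (β n)^2 * (sβ / (sβ*sp)^7) = t/((Pf x t)^3 * sp) := by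
      rw [← hsp2, ← hsβ2, htval]
      field_simp
    have I2 : (β n)^2 * ((n:ℝ) * (Real.exp (-(h n)^2/2) / (h n)^7 / Real.sqrt (2*π)))
        = Real.exp (-x) * (Real.exp ((x+1)*t) * t/((Pf x t)^3 * sp)) := by
      rw [hhsplit] at hexpprod
      rw [hn_val, hhsplit]
      calc (β n)^2 * (Real.sqrt (2*π) * sβ * Real.exp (β n/2) *
            (Real.exp (-(sβ*sp)^2/2) / (sβ*sp)^7 / Real.sqrt (2*π)))
          = ((β n)^2 * (sβ/(sβ*sp)^7)) * (Real.exp (β n/2) * Real.exp (-(sβ*sp)^2/2)) := by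
            field_simp
            try ring
        _ = (t/((Pf x t)^3*sp)) * (Real.exp (-x) * Real.exp ((x+1)*t)) := by
            rw [hW2, hexpprod]
        _ = Real.exp (-x) * (Real.exp ((x+1)*t) * t/((Pf x t)^3 * sp)) := by
            ring
    have hS_eq : 1 - stdNormalCDF (h n)
        = (∫ u in Set.Ioi (h n), Real.exp (-u^2/2)) / Real.sqrt (2*π) := by
      rw [cdf_compl, MeasureTheory.integral_div]
    obtain ⟨mlo, mhi⟩ := mills_bounds (h n) hpos
    have hn0 : (0:ℝ) ≤ (n:ℝ) := Nat.cast_nonneg n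
    have hβt : (β n)^2 * t^2 = 1 := by
      rw [htdef]
      field_simp
    have hup : (n:ℝ) * (1 - stdNormalCDF (h n))
        ≤ Real.exp (-x) * (Real.exp ((x+1)*t) * Qf x t) := by
      rw [← I1]
      apply mul_le_mul_of_nonneg_left _ hn0
      rw [hS_eq]
      gcongr
    have hdn : (n:ℝ) * (1 - stdNormalCDF (h n))
        ≥ Real.exp (-x) * (Real.exp ((x+1)*t) * Qf x t)
          - 15 * ((n:ℝ) * (Real.exp (-(h n)^2/2) / (h n)^7 / Real.sqrt (2*π))) := by
      rw [← I1]
      have hstep : (Real.exp (-(h n)^2/2) * (1/h n - 1/(h n)^3 + 3/(h n)^5)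
          - 15 * (Real.exp (-(h n)^2/2) / (h n)^7)) / Real.sqrt (2*π)
          ≤ 1 - stdNormalCDF (h n) := by
        rw [hS_eq]
        gcongr
      have hmul := mul_le_mul_of_nonneg_left hstep hn0
      calc (n:ℝ) * (Real.exp (-(h n)^2/2) * (1/h n - 1/(h n)^3 + 3/(h n)^5) / Real.sqrt (2*π))
            - 15 * ((n:ℝ) * (Real.exp (-(h n)^2/2) / (h n)^7 / Real.sqrt (2*π)))
          = (n:ℝ) * ((Real.exp (-(h n)^2/2) * (1/h n - 1/(h n)^3 + 3/(h n)^5)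
            - 15 * (Real.exp (-(h n)^2/2) / (h n)^7)) / Real.sqrt (2*π)) := by
            field_simp
        _ ≤ (n:ℝ) * (1 - stdNormalCDF (h n)) := hmul
    have hhi_eq : (β n)^2 * (Real.exp (-x) * (Real.exp ((x+1)*t) * Qf x t) - Real.exp (-x))
        = Real.exp (-x) * ((Real.exp ((x+1)*t) * Qf x t - 1)/t^2) := by
      rw [mul_div_assoc', eq_div_iff (by positivity : (t:ℝ)^2 ≠ 0)]
      linear_combination (Real.exp (-x) * (Real.exp ((x+1)*t) * Qf x t) - Real.exp (-x)) * hβt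
    constructor
    · have hmono := mul_le_mul_of_nonneg_left (sub_le_sub_right hdn (Real.exp (-x))) (sq_nonneg (β n))
      calc Real.exp (-x) * ((Real.exp ((x+1)*t) * Qf x t - 1)/t^2)
            - 15 * (Real.exp (-x) * (Real.exp ((x+1)*t) * t/((Pf x t)^3 * sp)))
          = (β n)^2 * ((Real.exp (-x) * (Real.exp ((x+1)*t) * Qf x t)
              - 15 * ((n:ℝ) * (Real.exp (-(h n)^2/2) / (h n)^7 / Real.sqrt (2*π))))
              - Real.exp (-x)) := by
            rw [← hhi_eq, ← I2]
            ring
        _ ≤ (β n)^2 * ((n : ℝ) * (1 - stdNormalCDF (h n)) - Real.exp (-x)) := hmono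
    · have hmono := mul_le_mul_of_nonneg_left (sub_le_sub_right hup (Real.exp (-x))) (sq_nonneg (β n))
      calc (β n)^2 * ((n : ℝ) * (1 - stdNormalCDF (h n)) - Real.exp (-x))
          ≤ (β n)^2 * (Real.exp (-x) * (Real.exp ((x+1)*t) * Qf x t) - Real.exp (-x)) := hmono
        _ = Real.exp (-x) * ((Real.exp ((x+1)*t) * Qf x t - 1)/t^2) := hhi_eq
  exact tendsto_of_tendsto_of_tendsto_of_le_of_le' hlo hhi
    (hboth.mono fun n hn => hn.1) (hboth.mono fun n hn => hn.2)

lemma stdNormalCDF_le_one (y : ℝ) : stdNormalCDF y ≤ 1 := by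
  rw [stdNormalCDF, ← gauss_total]
  apply MeasureTheory.setIntegral_le_integral gauss_integrable
  filter_upwards with u
  positivity

end AuxProofs

/-- Hall's first-order result, `t = 2`: With `b_n` the unique positive
solution of `2π b_n² exp(b_n²) = n²`, `c_n = 2 − 2b_n^{−2}`, `d_n = b_n² − 2b_n^{−2}`,
`h_n = (c_n x + d_n)^{1/2}` and `F_n(x) = Φ(h_n)^n − (1 − Φ(h_n))^n`:
`lim_{n→∞} b_n⁴ (F_n(x) − Λ(x)) = −Λ(x) e^{−x} (7/2 + 3x + x²)`. -/
theorem powered_extremes_first_order_limit_t_eq_two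
    (b : ℕ → ℝ)
    (hb : ∀ n : ℕ, 1 ≤ n → 0 < b n ∧
      2 * Real.pi * (b n) ^ 2 * Real.exp ((b n) ^ 2) = (n : ℝ) ^ 2)
    (x : ℝ)
    (c d h F : ℕ → ℝ)
    (hc : ∀ n : ℕ, c n = 2 - 2 / (b n) ^ 2)
    (hd : ∀ n : ℕ, d n = (b n) ^ 2 - 2 / (b n) ^ 2)
    (hh : ∀ n : ℕ, h n = (c n * x + d n) ^ ((1 : ℝ) / 2))
    (hF : ∀ n : ℕ, F n = stdNormalCDF (h n) ^ n - (1 - stdNormalCDF (h n)) ^ n) :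
    Tendsto (fun n : ℕ => (b n) ^ 4 * (F n - gumbel x)) atTop
      (𝓝 (-(gumbel x * Real.exp (-x) * (7 / 2 + 3 * x + x ^ 2)))) := by
  have hT := part1 b hb x c d h hc hd hh
  set β : ℕ → ℝ := fun n => (b n)^2 with hβdef
  set S : ℕ → ℝ := fun n => 1 - stdNormalCDF (h n) with hSdef
  set A : ℕ → ℝ := fun n => (n:ℝ) * Real.log (1 - S n) with hAdef
  clear_value A S β
  have hβpos : ∀ n, 1 ≤ n → 0 < β n := by
    intro n hn
    simp only [hβdef]
    exact pow_pos (hb n hn).1 2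
  have hS0 : ∀ n, 0 ≤ S n := by
    intro n
    simp only [hSdef]
    have := stdNormalCDF_le_one (h n)
    linarith
  -- β → ∞ (again)
  have hβtop : Tendsto β atTop atTop := by
    apply tendsto_atTop_mono' atTop
      (show ∀ᶠ n : ℕ in atTop, Real.log n - Real.log (2*π)/2 ≤ β n from ?_)
    · have h1 : Tendsto (fun n : ℕ => Real.log n) atTop atTop :=
        Real.tendsto_log_atTop.comp tendsto_natCast_atTop_atTop
      have h2 := tendsto_atTop_add_const_right atTop (-(Real.log (2*π)/2)) h1
      apply h2.congr
      intro n; ring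
    · filter_upwards [eventually_ge_atTop 1] with n hn
      have hβ0 := hβpos n hn
      have heq : 2 * π * β n * Real.exp (β n) = (n:ℝ)^2 := by
        simp only [hβdef]; exact (hb n hn).2
      have hexp := Real.add_one_le_exp (β n)
      have hpi := Real.pi_pos
      have h1 : (n:ℝ)^2 ≤ 2*π*(Real.exp (β n)*Real.exp (β n)) := by
        rw [← heq]
        nlinarith [Real.exp_pos (β n), mul_pos (mul_pos two_pos hpi) (Real.exp_pos (β n)),
          mul_le_mul_of_nonneg_right hexp (Real.exp_pos (β n)).le]
      rw [← Real.exp_add] at h1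
      have hn0 : (0:ℝ) < (n:ℝ)^2 := by
        have : (1:ℝ) ≤ (n:ℝ) := by exact_mod_cast hn
        positivity
      have h2 : Real.log ((n:ℝ)^2) ≤ Real.log (2*π*Real.exp (β n + β n)) :=
        Real.log_le_log hn0 h1
      rw [Real.log_mul (by positivity) (Real.exp_pos _).ne', Real.log_exp,
        Real.log_pow] at h2
      push_cast at h2
      linarith
  have hβsq : Tendsto (fun n => ((β n)^2)⁻¹) atTop (𝓝 0) :=
    tendsto_inv_atTop_zero.comp ((tendsto_pow_atTop two_ne_zero).comp hβtop)
  have hβne : ∀ᶠ n : ℕ in atTop, 0 < β n := hβtop.eventually_gt_atTop 0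
  -- n * S n → exp(-x)
  have hnS : Tendsto (fun n : ℕ => (n:ℝ) * S n) atTop (𝓝 (Real.exp (-x))) := by
    have h1 := hT.mul hβsq
    rw [mul_zero] at h1
    have h2 : Tendsto (fun n : ℕ => (n:ℝ) * S n - Real.exp (-x)) atTop (𝓝 0) := by
      apply h1.congr'
      filter_upwards [hβne] with n hβ0
      simp only [hβdef] at hβ0
      simp only [hβdef, hSdef]
      have hbn : b n ≠ 0 := by rintro h0; simp [h0] at hβ0
      field_simp
    have h3 := h2.add_const (Real.exp (-x))
    simpa using h3
  have hSz : Tendsto S atTop (𝓝 0) := by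
    have hninv : Tendsto (fun n : ℕ => ((n:ℝ))⁻¹) atTop (𝓝 0) :=
      tendsto_inv_atTop_zero.comp tendsto_natCast_atTop_atTop
    have h1 := hnS.mul hninv
    rw [mul_zero] at h1
    apply h1.congr'
    filter_upwards [eventually_ge_atTop 1] with n hn
    have : (n:ℝ) ≠ 0 := by positivity
    field_simp
    try ring
  -- β² / n → 0
  have hb2n : Tendsto (fun n : ℕ => (β n)^2 * ((n:ℝ))⁻¹) atTop (𝓝 0) := by
    have htail : Tendsto (fun n => (β n)^2 * Real.exp (-(β n)/2)) atTop (𝓝 0) := by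
      have hbase := Real.tendsto_pow_mul_exp_neg_atTop_nhds_zero 2
      have hdiv : Tendsto (fun y : ℝ => y/2) atTop atTop :=
        Tendsto.atTop_div_const two_pos tendsto_id
      have hcomp := (hbase.comp hdiv).comp hβtop
      have h4 := hcomp.const_mul 4
      rw [mul_zero] at h4
      apply h4.congr
      intro n
      simp only [Function.comp]
      rw [show -(β n/2) = -(β n)/2 from by ring]
      ring
    apply squeeze_zero_norm' _ htail
    filter_upwards [eventually_ge_atTop 1, hβtop.eventually_ge_atTop 1] with n hn hβ1
    have hn1 : (1:ℝ) ≤ (n:ℝ) := by exact_mod_cast hn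
    have hβ0 : 0 < β n := by linarith
    have heq : 2 * π * β n * Real.exp (β n) = (n:ℝ)^2 := by
      simp only [hβdef]; exact (hb n hn).2
    have hpi := Real.pi_gt_three
    have hexpo : Real.exp (β n/2) ≤ (n:ℝ) := by
      have h1 : Real.exp (β n/2)^2 ≤ (n:ℝ)^2 := by
        rw [← Real.exp_nat_mul]
        push_cast
        rw [show (2:ℝ) * (β n/2) = β n from by ring, ← heq]
        have h5 : (1:ℝ) ≤ 2*π*β n := by nlinarith
        have h6 := mul_le_mul_of_nonneg_right h5 (Real.exp_pos (β n)).le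
        linarith
      nlinarith [Real.exp_pos (β n/2)]
    have hinv : ((n:ℝ))⁻¹ ≤ Real.exp (-(β n)/2) := by
      rw [show -(β n)/2 = -(β n/2) from by ring, Real.exp_neg]
      apply inv_anti₀ (Real.exp_pos _) hexpo
    rw [Real.norm_eq_abs, abs_of_nonneg (by positivity)]
    apply mul_le_mul_of_nonneg_left hinv (sq_nonneg _)
  have hβ2S : Tendsto (fun n => (β n)^2 * S n) atTop (𝓝 0) := by
    have h1 := hb2n.mul hnS
    rw [zero_mul] at h1
    apply h1.congr'
    filter_upwards [eventually_ge_atTop 1] with n hn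
    have : (n:ℝ) ≠ 0 := by
      have : (1:ℝ) ≤ (n:ℝ) := by exact_mod_cast hn
      positivity
    field_simp
  have hShalf : ∀ᶠ n : ℕ in atTop, S n ≤ 1/2 :=
    hSz.eventually (eventually_le_nhds one_half_pos)
  -- β²(A + nS) → 0
  have hD : Tendsto (fun n : ℕ => (β n)^2*(A n + (n:ℝ)*S n)) atTop (𝓝 0) := by
    have hlow : Tendsto (fun n : ℕ => -(2*((n:ℝ)*S n)*((β n)^2*S n))) atTop (𝓝 0) := by
      have := ((hnS.const_mul 2).mul hβ2S).neg
      simpa using this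
    apply tendsto_of_tendsto_of_tendsto_of_le_of_le' hlow tendsto_const_nhds
    · filter_upwards [hShalf] with n hhalf
      have h1S : 0 < 1 - S n := by linarith [hS0 n]
      have hb1 : -(2*(S n)^2) ≤ Real.log (1 - S n) + S n := by
        have h2 := Real.log_le_sub_one_of_pos (inv_pos.mpr h1S)
        rw [Real.log_inv] at h2
        have h3 : (1-S n)⁻¹ - 1 = S n/(1-S n) := by field_simp; ring
        have h4 : S n/(1-S n) ≤ S n + 2*(S n)^2 := by
          rw [div_le_iff₀ h1S]
          nlinarith [hS0 n, sq_nonneg (S n)]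
        nlinarith
      have hAe : A n + (n:ℝ)*S n = (n:ℝ)*(Real.log (1-S n) + S n) := by
        simp only [hAdef]
        ring
      have hc0 : (0:ℝ) ≤ (β n)^2 * (n:ℝ) := by positivity
      have hmul := mul_le_mul_of_nonneg_left hb1 hc0
      calc -(2*((n:ℝ)*S n)*((β n)^2*S n)) = (β n)^2*(n:ℝ) * (-(2*(S n)^2)) := by ring
        _ ≤ (β n)^2*(n:ℝ) * (Real.log (1-S n) + S n) := hmul
        _ = (β n)^2*(A n + (n:ℝ)*S n) := by rw [hAe]; ring
    · filter_upwards [hShalf] with n hhalf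
      have h1S : 0 < 1 - S n := by linarith [hS0 n]
      have hb2 : Real.log (1-S n) + S n ≤ 0 := by
        have := Real.log_le_sub_one_of_pos h1S
        linarith
      have hAe : A n + (n:ℝ)*S n = (n:ℝ)*(Real.log (1-S n) + S n) := by
        simp only [hAdef]
        ring
      rw [hAe]
      have hc0 : (0:ℝ) ≤ (β n)^2 * (n:ℝ) := by positivity
      nlinarith
  -- β²(A + e^{-x}) → -e^{-x}K
  have hA2 : Tendsto (fun n => (β n)^2*(A n + Real.exp (-x))) atTop
      (𝓝 (-(Real.exp (-x) * (x^2+3*x+7/2)))) := by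
    have h1 := hD.sub hT
    rw [zero_sub] at h1
    apply h1.congr
    intro n
    simp only [hβdef, hSdef]
    ring
  have hA0 : Tendsto (fun n => A n + Real.exp (-x)) atTop (𝓝 0) := by
    have h1 := hA2.mul hβsq
    rw [mul_zero] at h1
    apply h1.congr'
    filter_upwards [hβne] with n hβ0
    field_simp
  have hE : Tendsto (fun n => Efun (A n + Real.exp (-x))) atTop (𝓝 1) :=
    tendsto_Efun.comp hA0
  -- β²(exp A - Λ) → Λ·(-e^{-x}K)
  have hB : Tendsto (fun n => (β n)^2*(Real.exp (A n) - gumbel x)) atTop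
      (𝓝 (gumbel x * (-(Real.exp (-x) * (x^2+3*x+7/2)) * 1))) := by
    have h1 := (hA2.mul hE).const_mul (gumbel x)
    apply h1.congr
    intro n
    have hkey : Real.exp (A n) - gumbel x
        = gumbel x * ((A n + Real.exp (-x)) * Efun (A n + Real.exp (-x))) := by
      rw [← exp_sub_one_eq, gumbel,
        show Real.exp (A n) = Real.exp (-Real.exp (-x)) * Real.exp (A n + Real.exp (-x))
          from by rw [← Real.exp_add]; congr 1; ring]
      ring
    rw [hkey]
    ring
  -- β² Sⁿ → 0
  have hC : Tendsto (fun n => (β n)^2 * (S n)^n) atTop (𝓝 0) := by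
    have hup : Tendsto (fun n => ((β n)^2*S n)*S n) atTop (𝓝 0) := by
      have := hβ2S.mul hSz
      simpa using this
    apply tendsto_of_tendsto_of_tendsto_of_le_of_le' tendsto_const_nhds hup
    · filter_upwards with n
      exact mul_nonneg (sq_nonneg _) (pow_nonneg (hS0 n) n)
    · filter_upwards [eventually_ge_atTop 2, hShalf] with n hn2 hhalf
      have hpow : (S n)^n ≤ (S n)^2 := by
        apply pow_le_pow_of_le_one (hS0 n) (by linarith) hn2
      calc (β n)^2 * (S n)^n ≤ (β n)^2 * (S n)^2 := by
            apply mul_le_mul_of_nonneg_left hpow (sq_nonneg _)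
        _ = ((β n)^2*S n)*S n := by ring
  -- assemble
  have hfin := hB.sub hC
  rw [sub_zero, show gumbel x * (-(Real.exp (-x) * (x^2+3*x+7/2)) * 1)
      = -(gumbel x * Real.exp (-x) * (7 / 2 + 3 * x + x ^ 2)) from by ring] at hfin
  apply hfin.congr'
  filter_upwards [hShalf] with n hhalf
  have h1S : 0 < 1 - S n := by linarith [hS0 n]
  have hΦeq : stdNormalCDF (h n) = 1 - S n := by
    simp only [hSdef]
    ring
  have hexpA : Real.exp (A n) = (1 - S n)^n := by
    simp only [hAdef]
    rw [Real.exp_nat_mul, Real.exp_log h1S]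
  rw [hF n, hΦeq, ← hexpA]
  have hb4 : (b n)^4 = (β n)^2 := by simp only [hβdef]; ring
  rw [hb4]
  ring
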